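/- Every regular extremal translation-invariant stationary (ETIS) state μ of the F-SSEP has a definite density: there exists ρ ∈ [0,1] such that μ has density ρ. Moreover, μ(F) = 0 or μ(F) = 1, where F is the set of frozen configurations. -/

import Mathlib

open MeasureTheory Filter
open scoped ENNReal

attribute [local instance] Classical.propDecidable

noncomputable section
namespace FSSEPPaper

/-- Configuration space of the F-SSEP. -/
abbrev X : Type := ℤ → Bool
/-- Configuration space of the SSM (stack model). -/
abbrev XS : Type := ℤ → ℕ
/-- Parity sequences. -/
abbrev PS : Type := ℤ → Bool

/-- The `(m+1)`-st binary digit of `x`. -/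
def rbit (m : ℕ) (x : ℝ) : Bool := decide (⌊x * 2 ^ (m + 1)⌋ % 2 = 1)

/-- The i.i.d. fair-coin product measure on `ℤ → Bool`, realized through the binary
digits of a uniform random number in `(0,1)`. -/
def coin : Measure (ℤ → Bool) :=
  (volume.restrict (Set.Ioo (0:ℝ) 1)).map (fun x (i : ℤ) => rbit (Encodable.encode i) x)

/-! ### F-SSEP dynamics -/

/-- `wantsR η i`: the particle at `i` attempts to jump to the right. -/
def wantsR (η : X) (i : ℤ) : Bool := η i && η (i - 1) && !η (i + 1)
/-- `wantsL η i`: the particle at `i` attempts to jump to the left. -/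
def wantsL (η : X) (i : ℤ) : Bool := η i && η (i + 1) && !η (i - 1)
/-- The particle at `i` jumps to the right (the coin at the target site resolves conflicts). -/
def jumpsR (η : X) (α : ℤ → Bool) (i : ℤ) : Bool :=
  wantsR η i && (!(wantsL η (i + 2)) || α (i + 1))
/-- The particle at `i` jumps to the left. -/
def jumpsL (η : X) (α : ℤ → Bool) (i : ℤ) : Bool :=
  wantsL η i && (!(wantsR η (i - 2)) || !(α (i - 1)))
/-- One synchronous step of the F-SSEP given the coin field `α`. -/
def fstep (η : X) (α : ℤ → Bool) : X := fun i =>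
  (η i && !(jumpsR η α i) && !(jumpsL η α i)) || jumpsR η α (i - 1) || jumpsL η α (i + 1)

/-- The transition kernel of the F-SSEP. -/
def QF (η : X) : Measure X := coin.map (fstep η)

/-! ### SSM dynamics -/

/-- Net rightward particle flow across the bond `⟨k,k+1⟩` given the coin field `α`. -/
def flow (n : XS) (α : ℤ → Bool) (k : ℤ) : ℤ :=
  if 2 ≤ n k then (if 2 ≤ n (k + 1) then (if α k then 1 else -1) else 1)
  else (if 2 ≤ n (k + 1) then -1 else 0)
/-- One synchronous step of the SSM given the coin field `α`. -/
def sstep (n : XS) (α : ℤ → Bool) : XS := fun i =>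
  ((n i : ℤ) + flow n α (i - 1) - flow n α i).toNat

/-- The transition kernel of the SSM. -/
def QS (n : XS) : Measure XS := coin.map (sstep n)

/-! ### Shifts and classes of measures -/

/-- The shift `τ` on sequences of Booleans: `(τη)(i) = η(i-1)`. -/
def shf (η : ℤ → Bool) : ℤ → Bool := fun i => η (i - 1)
/-- The shift `τ` on stack configurations. -/
def shs (n : XS) : XS := fun i => n (i - 1)

/-- Translation-invariant probability measure on `X`. -/
def TIF (μ : Measure X) : Prop := IsProbabilityMeasure μ ∧ μ.map shf = μ
/-- Translation-invariant stationary state of the F-SSEP. -/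
def TISF (μ : Measure X) : Prop := TIF μ ∧ μ.bind QF = μ
/-- Ergodic translation-invariant measure on `X` (extreme point of the TI measures). -/
def ErgF (μ : Measure X) : Prop := TIF μ ∧ ∀ μ₁ μ₂ : Measure X, TIF μ₁ → TIF μ₂ →
  ∀ p : ℝ≥0∞, 0 < p → p < 1 → μ = p • μ₁ + (1 - p) • μ₂ → μ₁ = μ
/-- Extremal translation-invariant stationary state of the F-SSEP. -/
def ETISF (μ : Measure X) : Prop := TISF μ ∧ ∀ μ₁ μ₂ : Measure X, TISF μ₁ → TISF μ₂ →
  ∀ p : ℝ≥0∞, 0 < p → p < 1 → μ = p • μ₁ + (1 - p) • μ₂ → μ₁ = μ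
/-- A measure on `X` is regular if the all-ones configuration carries no mass. -/
def RegF (μ : Measure X) : Prop := μ {η : X | ∀ i, η i = true} = 0

/-- Translation-invariant probability measure on `X̂`. -/
def TI_S (μ : Measure XS) : Prop := IsProbabilityMeasure μ ∧ μ.map shs = μ
/-- Translation-invariant stationary state of the SSM. -/
def TIS_S (μ : Measure XS) : Prop := TI_S μ ∧ μ.bind QS = μ
/-- Ergodic translation-invariant measure on `X̂`. -/
def Erg_S (μ : Measure XS) : Prop := TI_S μ ∧ ∀ μ₁ μ₂ : Measure XS, TI_S μ₁ → TI_S μ₂ →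
  ∀ p : ℝ≥0∞, 0 < p → p < 1 → μ = p • μ₁ + (1 - p) • μ₂ → μ₁ = μ
/-- Extremal translation-invariant stationary state of the SSM. -/
def ETIS_S (μ : Measure XS) : Prop := TIS_S μ ∧ ∀ μ₁ μ₂ : Measure XS, TIS_S μ₁ → TIS_S μ₂ →
  ∀ p : ℝ≥0∞, 0 < p → p < 1 → μ = p • μ₁ + (1 - p) • μ₂ → μ₁ = μ
/-- A measure on `X̂` is regular if the expected stack height at the origin is finite. -/
def Reg_S (μ : Measure XS) : Prop := ∫⁻ n, (n 0 : ℝ≥0∞) ∂μ ≠ ⊤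

/-! ### Densities -/

/-- `μ` has density `ρ`: a.s. both one-sided Cesàro averages of the configuration equal `ρ`. -/
def densF (μ : Measure X) (ρ : ℝ) : Prop :=
  ∀ᵐ η ∂μ,
    Tendsto (fun N : ℕ => (∑ i ∈ Finset.range N, (if η ((i : ℤ) + 1) then (1:ℝ) else 0)) / (N : ℝ))
      atTop (nhds ρ) ∧
    Tendsto (fun N : ℕ => (∑ i ∈ Finset.range N, (if η (-(i : ℤ) - 1) then (1:ℝ) else 0)) / (N : ℝ))
      atTop (nhds ρ)

/-- `μ` has density `ρ̂`: a.s. both one-sided Cesàro averages of the stack heights equal `ρ̂`. -/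
def densS (μ : Measure XS) (ρ : ℝ) : Prop :=
  ∀ᵐ n ∂μ,
    Tendsto (fun N : ℕ => (∑ i ∈ Finset.range N, (n ((i : ℤ) + 1) : ℝ)) / (N : ℝ)) atTop (nhds ρ) ∧
    Tendsto (fun N : ℕ => (∑ i ∈ Finset.range N, (n (-(i : ℤ) - 1) : ℝ)) / (N : ℝ)) atTop (nhds ρ)

/-! ### Special sets of configurations -/

/-- Frozen F-SSEP configurations: no two adjacent occupied sites. -/
def frozenF : Set X := {η | ∀ i : ℤ, η i = false ∨ η (i + 1) = false}
/-- Frozen SSM configurations: every stack has height `0` or `1`. -/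
def frozenS : Set XS := {n | ∀ i : ℤ, n i ≤ 1}
/-- `X̂*`: no two adjacent short stacks. -/
def XstarS : Set XS := {n | ∀ i : ℤ, ¬(n i ≤ 1 ∧ n (i + 1) ≤ 1)}
/-- The even sector `X̂*_e`: all heights even, no two adjacent zeros. -/
def XeS : Set XS := {n | (∀ i : ℤ, Even (n i)) ∧ ∀ i : ℤ, ¬(n i = 0 ∧ n (i + 1) = 0)}
/-- `H = φ(X̂*)`: the F-SSEP configurations containing none of `000`, `0100`, `0010`, `01010`. -/
def Hset : Set X := {η | ∀ i : ℤ,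
  ¬(η i = false ∧ η (i+1) = false ∧ η (i+2) = false) ∧
  ¬(η i = false ∧ η (i+1) = true ∧ η (i+2) = false ∧ η (i+3) = false) ∧
  ¬(η i = false ∧ η (i+1) = false ∧ η (i+2) = true ∧ η (i+3) = false) ∧
  ¬(η i = false ∧ η (i+1) = true ∧ η (i+2) = false ∧ η (i+3) = true ∧ η (i+4) = false)}

/-- The height profile `h_η`, with `h_η(0) = 0` and increments `(-1)^{η(k)}`. -/
def hgt (η : X) (k : ℤ) : ℤ :=
  (∑ i ∈ Finset.Icc (1:ℤ) k, (if η i then (-1:ℤ) else 1)) -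
    (∑ i ∈ Finset.Icc (k + 1) (0:ℤ), (if η i then (-1:ℤ) else 1))

/-! ### The stationary path measure -/

/-- Finite-dimensional distributions of the stationary F-SSEP Markov chain started from `μ`. -/
def chain (μ : Measure X) : (n : ℕ) → Measure (Fin (n + 1) → X)
  | 0 => μ.map (fun η _ => η)
  | (n + 1) => (chain μ n).bind
      (fun path => (QF (path (Fin.last n))).map (fun η' => Fin.snoc path η'))

/-- `P` is the two-sided stationary path measure of the F-SSEP with one-time marginal `μ`. -/
def IsPathMeasure (μ : Measure X) (P : Measure (ℤ → X)) : Prop :=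
  IsProbabilityMeasure P ∧ ∀ (t : ℤ) (n : ℕ),
    P.map (fun ξ (k : Fin (n + 1)) => ξ (t + ((k : ℕ) : ℤ))) = chain μ n

/-! ### Bernoulli initial states and the time evolution -/

/-- An i.i.d. family of uniform `[0,1]` random variables extracted from a single uniform. -/
def unif01 (x : ℝ) (i : ℤ) : ℝ :=
  ∑' k : ℕ, if rbit (Nat.pair (Encodable.encode i) k) x then ((2:ℝ) ^ (k + 1))⁻¹ else 0

/-- The Bernoulli product measure of density `ρ` on `X`. -/
def bernoulliProd (ρ : ℝ) : Measure X :=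
  (volume.restrict (Set.Ioo (0:ℝ) 1)).map (fun x (i : ℤ) => decide (unif01 x i < ρ))

/-- `iterF μ t = μ Q^t`, the state at time `t` of the F-SSEP started from `μ`. -/
def iterF (μ : Measure X) : ℕ → Measure X
  | 0 => μ
  | (t + 1) => (iterF μ t).bind QF

/-- `S_η`: the sites `i` with `η(i-2) = η(i-1) = η(i) = 0`. -/
def Sset (η : X) : Set ℤ := {i | η (i - 2) = false ∧ η (i - 1) = false ∧ η i = false}

/-- The event that `t 0 < t 1 < ⋯ < t m` are consecutive points of `S_η`. -/
def renewEvent (t : ℕ → ℤ) (m : ℕ) : Set X :=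
  {η | (∀ j ≤ m, t j ∈ Sset η) ∧ ∀ x : ℤ, t 0 ≤ x → x ≤ t m → x ∈ Sset η → ∃ j ≤ m, t j = x}

/-! ### Substitution subshifts -/

/-- The smallest translation-invariant subset of `X` containing all configurations obtained
by the letterwise substitution `b ↦ w b`. -/
def substSet (w : Bool → List Bool) : Set X :=
  {η | ∃ (ζ : ℤ → Bool) (K : ℤ → ℤ),
    (∀ i : ℤ, K (i + 1) = K i + (w (ζ i)).length) ∧
    ∀ (i : ℤ) (j : ℕ) (h : j < (w (ζ i)).length), η (K i + (j : ℤ)) = (w (ζ i)).get ⟨j, h⟩}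

/-- The substitution `1 → 1100`, `0 → 10`. -/
def wLeft : Bool → List Bool := fun b => if b then [true, true, false, false] else [true, false]
/-- The substitution `1 → 0011`, `0 → 01`. -/
def wRight : Bool → List Bool := fun b => if b then [false, false, true, true] else [false, true]

/-- `X_left`. -/
def Xleft : Set X := substSet wLeft
/-- `X_right`. -/
def Xright : Set X := substSet wRight

/-- `X̂_left`: heights at most 2, a 2 is followed by a 0, a 0 is preceded by a 2. -/
def XSleft : Set XS :=
  {n | ∀ i : ℤ, n i ≤ 2 ∧ (n i = 2 → n (i + 1) = 0) ∧ (n i = 0 → n (i - 1) = 2)}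
/-- `X̂_right`: the spatial reflection of `X̂_left`. -/
def XSright : Set XS :=
  {n | ∀ i : ℤ, n i ≤ 2 ∧ (n i = 2 → n (i - 1) = 0) ∧ (n i = 0 → n (i + 1) = 2)}

/-! ### Ring measures and the grand canonical limit -/

/-- Admissible even ring configurations: all heights even, no two cyclically adjacent zeros. -/
def ringOK (L : ℕ) (n : ZMod (2 * L + 1) → ℕ) : Prop :=
  (∀ i, Even (n i)) ∧ ∀ i, ¬(n i = 0 ∧ n (i + 1) = 0)

/-- The grand canonical weight `ζ^{Σ n(i)} 4^{-z(n)}` of an admissible ring configuration. -/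
def ringW (ζ : ℝ) (L : ℕ) (n : ZMod (2 * L + 1) → ℕ) : ℝ≥0∞ :=
  if ringOK L n then
    (ENNReal.ofReal ζ) ^ (∑ i, n i) *
      ((4 : ℝ≥0∞) ^ (Finset.univ.filter (fun i => n i = 0)).card)⁻¹
  else 0

/-- The grand canonical measure `μ^(ζ,L)` on the ring of `2L+1` sites. -/
def muRing (ζ : ℝ) (L : ℕ) : Measure (ZMod (2 * L + 1) → ℕ) :=
  (∑' n, ringW ζ L n)⁻¹ • Measure.sum (fun n => ringW ζ L n • Measure.dirac n)

/-- The cylinder set in the ring determined by `m` on the window `[-K,K]`. -/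
def ringCyl (L K : ℕ) (m : ℤ → ℕ) : Set (ZMod (2 * L + 1) → ℕ) :=
  {n | ∀ i ∈ Finset.Icc (-(K : ℤ)) (K : ℤ), n ((i : ℤ) : ZMod (2 * L + 1)) = m i}

/-- The cylinder set in `X̂` determined by `m` on the window `[-K,K]`. -/
def cylS (K : ℕ) (m : ℤ → ℕ) : Set XS := {n | ∀ i ∈ Finset.Icc (-(K : ℤ)) (K : ℤ), n i = m i}

/-- `μ` is the weak limit `μ^(ζ,∞) = lim_L μ^(ζ,L)` (all cylinder probabilities converge). -/
def IsGCLimit (ζ : ℝ) (μ : Measure XS) : Prop :=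
  IsProbabilityMeasure μ ∧ ∀ (K : ℕ) (m : ℤ → ℕ),
    Tendsto (fun L : ℕ => muRing ζ L (ringCyl L K m)) atTop (nhds (μ (cylS K m)))

/-- `μ̂^(2)`: equal masses on the two configurations with alternating heights `0` and `2`. -/
def muHat2 : Measure XS :=
  (2 : ℝ≥0∞)⁻¹ • Measure.dirac (fun i : ℤ => if Even i then 2 else 0) +
    (2 : ℝ≥0∞)⁻¹ • Measure.dirac (fun i : ℤ => if Even i then 0 else 2)

/-- Mixing under the shift. -/
def MixingS (μ : Measure XS) : Prop :=
  ∀ A B : Set XS, MeasurableSet A → MeasurableSet B →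
    Tendsto (fun k : ℕ => μ (A ∩ shs^[k] ⁻¹' B)) atTop (nhds (μ A * μ B))

/-- Weak mixing under the shift. -/
def WeakMixS (μ : Measure XS) : Prop :=
  ∀ A B : Set XS, MeasurableSet A → MeasurableSet B →
    Tendsto (fun N : ℕ =>
      (∑ k ∈ Finset.range N,
        |(μ (A ∩ shs^[k] ⁻¹' B)).toReal - (μ A).toReal * (μ B).toReal|) / (N : ℝ))
      atTop (nhds 0)

/-- The Gibbs weight of `m` on the window `[a,b]`, for fugacity `ζ` and the one-body
potential `V(n) = 2 ln 2 · δ_{n,0}` (so `e^{-V(0)} = 1/4`). -/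
def gibbsW (ζ : ℝ) (a b : ℤ) (m : XS) : ℝ≥0∞ :=
  (ENNReal.ofReal ζ) ^ (∑ i ∈ Finset.Icc a b, m i) *
    ((4 : ℝ≥0∞) ^ ((Finset.Icc a b).filter (fun i => m i = 0)).card)⁻¹

/-- `μ` is a Gibbs state for fugacity `ζ` and one-body potential `V(n) = 2 ln 2 · δ_{n,0}`,
together with the hard constraints defining `X̂*_e` (DLR ratio condition). -/
def IsGibbsV (ζ : ℝ) (μ : Measure XS) : Prop :=
  μ XeSᶜ = 0 ∧ ∀ a b : ℤ, a ≤ b → ∀ m m' : XS, m ∈ XeS → m' ∈ XeS →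
    (∀ i : ℤ, i < a ∨ b < i → m i = m' i) →
    μ {n : XS | ∀ i ∈ Finset.Icc (a - 1) (b + 1), n i = m i} * gibbsW ζ a b m' =
      μ {n : XS | ∀ i ∈ Finset.Icc (a - 1) (b + 1), n i = m' i} * gibbsW ζ a b m

/-! ### The parity decomposition -/

/-- `γ(m,σ) = m + σ`. -/
def gam (p : XS × PS) : XS := fun i => p.1 i + (if p.2 i then 1 else 0)
/-- The inverse of `γ` (on `X̂*`): split a configuration into even part and parity. -/
def gamInv (n : XS) : XS × PS := (fun i => n i - n i % 2, fun i => decide (n i % 2 = 1))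
/-- Diagonal shift on `X̂ × S`. -/
def shP (p : XS × PS) : XS × PS := (shs p.1, shf p.2)
/-- The SSM dynamics acting on the first factor of `X̂ × S` and trivially on the second. -/
def QP (p : XS × PS) : Measure (XS × PS) := (QS p.1).map (fun m => (m, p.2))

/-- TIS state on `X̂*_e × S`. -/
def TIS_P (ν : Measure (XS × PS)) : Prop :=
  IsProbabilityMeasure ν ∧ ν.map shP = ν ∧ ν.bind QP = ν ∧ ν {p : XS × PS | p.1 ∉ XeS} = 0
/-- ETIS state on `X̂*_e × S`. -/
def ETIS_P (ν : Measure (XS × PS)) : Prop :=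
  TIS_P ν ∧ ∀ ν₁ ν₂ : Measure (XS × PS), TIS_P ν₁ → TIS_P ν₂ →
    ∀ p : ℝ≥0∞, 0 < p → p < 1 → ν = p • ν₁ + (1 - p) • ν₂ → ν₁ = ν

/-! ### The substitution bijection `Φ_φ` -/

/-- The starting position of the word substituted for the `i`-th letter (word `1` starts
at site `1`, and the word for `n(i)` is `0 1^{n(i)}`, of length `n(i) + 1`). -/
def Kst (n : XS) (i : ℤ) : ℤ :=
  1 + (∑ j ∈ Finset.Icc (1:ℤ) (i - 1), ((n j : ℤ) + 1)) -
    (∑ j ∈ Finset.Icc i (0:ℤ), ((n j : ℤ) + 1))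

/-- The substitution map `φ : X̂ → X`, replacing each height `n(i)` by `0 1^{n(i)}`. -/
def phiSub (n : XS) : X := fun x => if ∃ i : ℤ, Kst n i = x then false else true

/-- The normalization `Z_ν = Σ (k+1) ν({n(1) = k})`. -/
def Zsub (ν : Measure XS) : ℝ≥0∞ := ∑' k : ℕ, ((k : ℝ≥0∞) + 1) * ν {n : XS | n 1 = k}

/-- The bijection `Φ_φ` on regular TI measures induced by the substitution `φ`. -/
def Phi (ν : Measure XS) : Measure X :=
  (Zsub ν)⁻¹ • Measure.sum (fun p : (Σ k : ℕ, Fin (k + 1)) =>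
    (ν.restrict {n : XS | n 1 = p.1}).map (fun n (x : ℤ) => phiSub n (x + ((p.2 : ℕ) : ℤ))))

/-! ### Basic states -/

/-- The image `τ(A)` of a set of parity sequences under the shift. -/
def shiftSetP (A : Set PS) : Set PS := {σ | (fun i => σ (i + 1)) ∈ A}

/-- Cyclic successor in `Fin m`. -/
def finCycSucc {m : ℕ} (k : Fin m) : Fin m := ⟨(k.val + 1) % m, Nat.mod_lt _ k.pos⟩

/-- A `(λ,m)`-partition of `S`: pairwise disjoint, covering, cyclically permuted by the
shift (all modulo `λ`-null sets). -/
def IsCycPartition (lam : Measure PS) (m : ℕ) (A : Fin m → Set PS) : Prop :=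
  lam (⋃ k, A k)ᶜ = 0 ∧ (∀ k l, k ≠ l → lam (A k ∩ A l) = 0) ∧
    ∀ k, lam ((shiftSetP (A k) \ A (finCycSucc k)) ∪ (A (finCycSucc k) \ shiftSetP (A k))) = 0

/-- `ν^(q) = q⁻¹ Σ_{i<q} τ^{im}_* ν`. -/
def nuQ (ν : Measure XS) (q m : ℕ) : Measure XS :=
  ((q : ℝ≥0∞))⁻¹ • Measure.sum (fun i : Fin q => ν.map (shs^[(i : ℕ) * m]))

/-- The measure `μ̃^(λ,ν,A)` on `X̂*_e × S`, with `μ_σ = τ^k_* ν^(q)` for `σ ∈ A_k`. -/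
def mutilde (lam : Measure PS) (ν : Measure XS) (q m : ℕ) (A : Fin m → Set PS) :
    Measure (XS × PS) :=
  Measure.sum (fun k : Fin m => (((nuQ ν q m).map (shs^[(k : ℕ)])).prod (lam.restrict (A k))))

/-- `N_{ρ̂_e}`: stationary probability measures of the SSM supported on `X̂*_e` of
density `ρ̂_e` (not necessarily translation invariant). -/
def Nset (ρe : ℝ) : Set (Measure XS) :=
  {ν | IsProbabilityMeasure ν ∧ ν.bind QS = ν ∧ ν XeSᶜ = 0 ∧ densS ν ρe}

/-- `N̄_{ρ̂_e}`: the extreme points of `N_{ρ̂_e}`. -/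
def NExt (ρe : ℝ) : Set (Measure XS) :=
  {ν | ν ∈ Nset ρe ∧ ∀ ν₁ ν₂ : Measure XS, ν₁ ∈ Nset ρe → ν₂ ∈ Nset ρe →
    ∀ p : ℝ≥0∞, 0 < p → p < 1 → ν = p • ν₁ + (1 - p) • ν₂ → ν₁ = ν}

/-- `A'` is a proper refinement of `A` (modulo `λ`-null sets). -/
def ProperRefines (lam : Measure PS) {m m' : ℕ} (A' : Fin m' → Set PS) (A : Fin m → Set PS) :
    Prop :=
  m < m' ∧ ∀ j : Fin m', ∃ k : Fin m, lam (A' j \ A k) = 0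

/-- `μ` is an irreducible basic state of the SSM on `X̂*`. -/
def IsIrreducibleBasic (μ : Measure XS) : Prop :=
  ∃ (lam : Measure PS) (ρe : ℝ) (ν : Measure XS) (n m q : ℕ) (A : Fin m → Set PS),
    ErgF lam ∧ 1 ≤ ρe ∧ ν ∈ NExt ρe ∧
    0 < n ∧ ν.map (shs^[n]) = ν ∧ (∀ j : ℕ, 0 < j → j < n → ν.map (shs^[j]) ≠ ν) ∧
    n = q * m ∧ IsCycPartition lam m A ∧
    (¬ ∃ (m' : ℕ) (A' : Fin m' → Set PS),
      m' ∣ n ∧ IsCycPartition lam m' A' ∧ ProperRefines lam A' A) ∧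
    μ = (mutilde lam ν q m A).map gam

/-! ### Auxiliary development -/

section AuxDev

/-- Real indicator of a Boolean. -/
def ind (b : Bool) : ℝ := if b then 1 else 0

lemma ind_nonneg (b : Bool) : 0 ≤ ind b := by cases b <;> simp [ind]
lemma ind_le_one (b : Bool) : ind b ≤ 1 := by cases b <;> simp [ind]
lemma abs_ind_sub_le (a b : Bool) : |ind a - ind b| ≤ 1 := by
  cases a <;> cases b <;> simp [ind]

/-- Functions into `Bool` are measurable as soon as the truth set is measurable. -/
lemma measurable_of_bool {α : Type*} [MeasurableSpace α] {f : α → Bool}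
    (h : MeasurableSet {a | f a = true}) : Measurable f := by
  apply measurable_to_countable'
  intro x
  cases x
  · have : f ⁻¹' {false} = {a | f a = true}ᶜ := by
      ext a; simp only [Set.mem_preimage, Set.mem_singleton_iff, Set.mem_compl_iff,
        Set.mem_setOf_eq, Bool.not_eq_true]
    rw [this]; exact h.compl
  · have : f ⁻¹' {true} = {a | f a = true} := by ext a; simp
    rw [this]; exact h

lemma measurable_truth {α : Type*} [MeasurableSpace α] {f : α → Bool} (hf : Measurable f) :
    MeasurableSet {a | f a = true} := by
  have : {a | f a = true} = f ⁻¹' {true} := by ext a; simp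
  rw [this]; exact hf (measurableSet_singleton true)

lemma mband {α : Type*} [MeasurableSpace α] {f g : α → Bool}
    (hf : Measurable f) (hg : Measurable g) : Measurable fun a => f a && g a := by
  apply measurable_of_bool
  have : {a | (f a && g a) = true} = {a | f a = true} ∩ {a | g a = true} := by
    ext a; simp [Bool.and_eq_true]
  rw [this]; exact (measurable_truth hf).inter (measurable_truth hg)

lemma mbor {α : Type*} [MeasurableSpace α] {f g : α → Bool}
    (hf : Measurable f) (hg : Measurable g) : Measurable fun a => f a || g a := by
  apply measurable_of_bool
  have : {a | (f a || g a) = true} = {a | f a = true} ∪ {a | g a = true} := by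
    ext a; simp [Bool.or_eq_true]
  rw [this]; exact (measurable_truth hf).union (measurable_truth hg)

lemma mbnot {α : Type*} [MeasurableSpace α] {f : α → Bool}
    (hf : Measurable f) : Measurable fun a => !(f a) := by
  apply measurable_of_bool
  have : {a | (!(f a)) = true} = {a | f a = true}ᶜ := by
    ext a; simp
  rw [this]; exact (measurable_truth hf).compl

lemma measurable_fstep2 : Measurable fun p : X × X => fstep p.1 p.2 := by
  have me : ∀ j : ℤ, Measurable fun p : X × X => p.1 j := fun j =>
    (measurable_pi_apply j).comp measurable_fst
  have ma : ∀ j : ℤ, Measurable fun p : X × X => p.2 j := fun j =>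
    (measurable_pi_apply j).comp measurable_snd
  have mwR : ∀ j : ℤ, Measurable fun p : X × X => wantsR p.1 j := fun j =>
    mband (mband (me j) (me (j - 1))) (mbnot (me (j + 1)))
  have mwL : ∀ j : ℤ, Measurable fun p : X × X => wantsL p.1 j := fun j =>
    mband (mband (me j) (me (j + 1))) (mbnot (me (j - 1)))
  have mjR : ∀ j : ℤ, Measurable fun p : X × X => jumpsR p.1 p.2 j := fun j =>
    mband (mwR j) (mbor (mbnot (mwL (j + 2))) (ma (j + 1)))
  have mjL : ∀ j : ℤ, Measurable fun p : X × X => jumpsL p.1 p.2 j := fun j =>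
    mband (mwL j) (mbor (mbnot (mwR (j - 2))) (mbnot (ma (j - 1))))
  apply measurable_pi_lambda
  intro i
  exact mbor (mbor (mband (mband (me i) (mbnot (mjR i))) (mbnot (mjL i)))
    (mjR (i - 1))) (mjL (i + 1))

lemma measurable_fstep (η : X) : Measurable (fstep η) :=
  measurable_fstep2.comp (measurable_const.prodMk measurable_id)

lemma measurable_shf : Measurable shf :=
  measurable_pi_lambda _ fun i => measurable_pi_apply (i - 1)

/-- The inverse shift. -/
def shfInv (η : X) : X := fun i => η (i + 1)

lemma measurable_shfInv : Measurable shfInv :=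
  measurable_pi_lambda _ fun i => measurable_pi_apply (i + 1)

lemma shf_shfInv (η : X) : shf (shfInv η) = η := by
  funext i; simp [shf, shfInv]

lemma shfInv_shf (η : X) : shfInv (shf η) = η := by
  funext i; simp [shf, shfInv]

/-- `coin` is a finite measure. -/
lemma coin_finite : IsFiniteMeasure coin := by
  constructor
  rw [coin]
  by_cases h : AEMeasurable (fun x (i : ℤ) => rbit (Encodable.encode i) x)
      (volume.restrict (Set.Ioo (0:ℝ) 1))
  · rw [Measure.map_apply_of_aemeasurable h MeasurableSet.univ]
    calc (volume.restrict (Set.Ioo (0:ℝ) 1)) _ ≤ volume.restrict (Set.Ioo (0:ℝ) 1) Set.univ :=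
          measure_mono (Set.subset_univ _)
      _ < ⊤ := by
          rw [Measure.restrict_apply MeasurableSet.univ, Set.univ_inter, Real.volume_Ioo]
          exact ENNReal.ofReal_lt_top
  · rw [Measure.map_of_not_aemeasurable h]
    simp

lemma QF_apply (η : X) {s : Set X} (hs : MeasurableSet s) :
    QF η s = coin (fstep η ⁻¹' s) :=
  Measure.map_apply (measurable_fstep η) hs

lemma measurable_QF : Measurable QF := by
  haveI := coin_finite
  apply Measure.measurable_of_measurable_coe
  intro s hs
  have h1 : (fun η => QF η s) = fun η => ∫⁻ α, Set.indicator s (fun _ => 1) (fstep η α) ∂coin := by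
    funext η
    rw [QF_apply η hs]
    have h0 : (fun α => Set.indicator s (fun _ => (1:ℝ≥0∞)) (fstep η α)) =
        fun α => Set.indicator (fstep η ⁻¹' s) (fun _ => (1:ℝ≥0∞)) α := by
      funext α
      by_cases h : fstep η α ∈ s <;> simp [Set.indicator, h]
    rw [h0]
    have := lintegral_indicator_one (μ := coin) ((measurable_fstep η) hs)
    rw [← this]
    rfl
  rw [h1]
  exact Measurable.lintegral_prod_right'
    ((measurable_const.indicator hs).comp measurable_fstep2)

lemma bindQF_apply (μ : Measure X) {s : Set X} (hs : MeasurableSet s) :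
    (μ.bind QF) s = ∫⁻ η, QF η s ∂μ :=
  Measure.bind_apply hs measurable_QF.aemeasurable

lemma measurable_QF_coe {s : Set X} (hs : MeasurableSet s) :
    Measurable fun η => QF η s :=
  (Measure.measurable_coe hs).comp measurable_QF

lemma coin_univ_eq_one (μ : Measure X) [IsProbabilityMeasure μ] (h : μ.bind QF = μ) :
    coin Set.univ = 1 := by
  have h2 : (μ.bind QF) Set.univ = μ Set.univ := by rw [h]
  rw [bindQF_apply μ MeasurableSet.univ] at h2
  have h3 : ∀ η : X, QF η Set.univ = coin Set.univ := by
    intro η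
    rw [QF_apply η MeasurableSet.univ, Set.preimage_univ]
  simp only [h3, lintegral_const, measure_univ, mul_one] at h2
  exact h2

end AuxDev
section Conservation

/-- Net rightward current across the bond `⟨j, j+1⟩`. -/
def cflow (η α : X) (j : ℤ) : ℝ := ind (jumpsR η α j) - ind (jumpsL η α (j + 1))

lemma abs_cflow_le (η α : X) (j : ℤ) : |cflow η α j| ≤ 1 := abs_ind_sub_le _ _

lemma jumpsR_left_false {η : X} (α : X) {i : ℤ} (h : η i = true) :
    jumpsR η α (i - 1) = false := by
  have e1 : i - 1 + 1 = i := by ring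
  simp [jumpsR, wantsR, e1, h]

lemma jumpsL_right_false {η : X} (α : X) {i : ℤ} (h : η i = true) :
    jumpsL η α (i + 1) = false := by
  have e1 : i + 1 - 1 = i := by ring
  simp [jumpsL, wantsL, e1, h]

lemma jumpsR_self_false {η : X} (α : X) {i : ℤ} (h : η i = false) :
    jumpsR η α i = false := by simp [jumpsR, wantsR, h]

lemma jumpsL_self_false {η : X} (α : X) {i : ℤ} (h : η i = false) :
    jumpsL η α i = false := by simp [jumpsL, wantsL, h]

lemma not_both_jumps_self {η : X} (α : X) {i : ℤ} (hR : jumpsR η α i = true) :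
    jumpsL η α i = false := by
  have h1 : η (i - 1) = true := by
    simp only [jumpsR, wantsR, Bool.and_eq_true] at hR
    exact hR.1.1.2
  simp [jumpsL, wantsL, h1]

lemma not_both_jumps_into {η : X} (α : X) {i : ℤ}
    (hR : jumpsR η α (i - 1) = true) : jumpsL η α (i + 1) = false := by
  have e1 : i - 1 + 2 = i + 1 := by ring
  have e2 : i - 1 + 1 = i := by ring
  have e3 : i + 1 - 2 = i - 1 := by ring
  have e4 : i + 1 - 1 = i := by ring
  simp only [jumpsR, e1, e2, Bool.and_eq_true] at hR
  obtain ⟨hw, hc⟩ := hR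
  simp only [jumpsL, e3, e4, hw, Bool.not_true, Bool.false_or]
  cases hwl : wantsL η (i + 1)
  · simp
  · rw [hwl] at hc
    simp only [Bool.not_true, Bool.false_or] at hc
    simp [hc]

/-- Microscopic conservation law for one step of the F-SSEP. -/
lemma fstep_conserve (η α : X) (i : ℤ) :
    ind (fstep η α i) = ind (η i) + cflow η α (i - 1) - cflow η α i := by
  have e1 : i - 1 + 1 = i := by ring
  cases h : η i
  · have hR := jumpsR_self_false α h
    have hL := jumpsL_self_false α h
    cases hjr : jumpsR η α (i - 1)
    · cases hjl : jumpsL η α (i + 1) <;>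
        simp [fstep, cflow, e1, ind, h, hR, hL, hjr, hjl]
    · have hjl := not_both_jumps_into α hjr
      simp [fstep, cflow, e1, ind, h, hR, hL, hjr, hjl]
  · have hRm := jumpsR_left_false α h
    have hLp := jumpsL_right_false α h
    cases hjr : jumpsR η α i
    · cases hjl : jumpsL η α i <;>
        simp [fstep, cflow, e1, ind, h, hRm, hLp, hjr, hjl]
    · have hjl := not_both_jumps_self α hjr
      simp [fstep, cflow, e1, ind, h, hRm, hLp, hjr, hjl]

/-- Number of particles at sites `1,…,N` (matches the sums in `densF`). -/
def SFc (N : ℕ) (η : X) : ℝ := ∑ i ∈ Finset.range N, (if η ((i : ℤ) + 1) then (1:ℝ) else 0)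
/-- Number of particles at sites `-1,…,-N`. -/
def SBc (N : ℕ) (η : X) : ℝ := ∑ i ∈ Finset.range N, (if η (-(i : ℤ) - 1) then (1:ℝ) else 0)

lemma SFc_def (N : ℕ) (η : X) : SFc N η = ∑ i ∈ Finset.range N, ind (η ((i : ℤ) + 1)) := rfl
lemma SBc_def (N : ℕ) (η : X) : SBc N η = ∑ i ∈ Finset.range N, ind (η (-(i : ℤ) - 1)) := rfl

lemma SFc_nonneg (N : ℕ) (η : X) : 0 ≤ SFc N η :=
  Finset.sum_nonneg fun i _ => ind_nonneg _

lemma measurable_SFc (N : ℕ) : Measurable (SFc N) := by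
  apply Finset.measurable_sum
  intro i _
  exact Measurable.ite (measurable_truth (measurable_pi_apply ((i : ℤ) + 1)))
    measurable_const measurable_const

lemma measurable_SBc (N : ℕ) : Measurable (SBc N) := by
  apply Finset.measurable_sum
  intro i _
  exact Measurable.ite (measurable_truth (measurable_pi_apply (-(i : ℤ) - 1)))
    measurable_const measurable_const

lemma SFc_fstep_bound (η α : X) (N : ℕ) : |SFc N (fstep η α) - SFc N η| ≤ 2 := by
  set u : ℕ → ℝ := fun k => cflow η α (k : ℤ) with hu
  have key : SFc N (fstep η α) - SFc N η = u 0 - u N := by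
    rw [SFc_def, SFc_def, ← Finset.sum_sub_distrib]
    have h1 : ∀ i ∈ Finset.range N,
        ind (fstep η α ((i : ℤ) + 1)) - ind (η ((i : ℤ) + 1)) = u i - u (i + 1) := by
      intro i _
      have hc := fstep_conserve η α ((i : ℤ) + 1)
      have e : ((i : ℤ) + 1) - 1 = (i : ℤ) := by ring
      rw [e] at hc
      have e2 : ((i + 1 : ℕ) : ℤ) = (i : ℤ) + 1 := by push_cast; ring
      simp only [hu, e2]
      linarith
    rw [Finset.sum_congr rfl h1]
    have h2 : ∀ i ∈ Finset.range N, u i - u (i + 1) = -(u (i + 1) - u i) := by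
      intro i _; ring
    rw [Finset.sum_congr rfl h2, Finset.sum_neg_distrib, Finset.sum_range_sub (fun k => u k) N]
    ring
  rw [key]
  calc |u 0 - u N| ≤ |u 0| + |u N| := by
        rw [sub_eq_add_neg]
        exact (abs_add_le _ _).trans (by rw [abs_neg])
    _ ≤ 1 + 1 := add_le_add (abs_cflow_le _ _ _) (abs_cflow_le _ _ _)
    _ = 2 := by norm_num

lemma SBc_fstep_bound (η α : X) (N : ℕ) : |SBc N (fstep η α) - SBc N η| ≤ 2 := by
  set v : ℕ → ℝ := fun k => cflow η α (-(k : ℤ) - 1) with hv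
  have key : SBc N (fstep η α) - SBc N η = v N - v 0 := by
    rw [SBc_def, SBc_def, ← Finset.sum_sub_distrib]
    have h1 : ∀ i ∈ Finset.range N,
        ind (fstep η α (-(i : ℤ) - 1)) - ind (η (-(i : ℤ) - 1)) = v (i + 1) - v i := by
      intro i _
      have hc := fstep_conserve η α (-(i : ℤ) - 1)
      have e : (-(i : ℤ) - 1) - 1 = -((i + 1 : ℕ) : ℤ) - 1 := by push_cast; ring
      rw [e] at hc
      simp only [hv]
      linarith
    rw [Finset.sum_congr rfl h1, Finset.sum_range_sub (fun k => v k) N]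
  rw [key]
  calc |v N - v 0| ≤ |v N| + |v 0| := by
        rw [sub_eq_add_neg]
        exact (abs_add_le _ _).trans (by rw [abs_neg])
    _ ≤ 1 + 1 := add_le_add (abs_cflow_le _ _ _) (abs_cflow_le _ _ _)
    _ = 2 := by norm_num

lemma SFc_shf_bound (η : X) (N : ℕ) : |SFc N (shf η) - SFc N η| ≤ 2 := by
  set w : ℕ → ℝ := fun k => ind (η (k : ℤ)) with hw
  have key : SFc N η - SFc N (shf η) = w N - w 0 := by
    rw [SFc_def, SFc_def, ← Finset.sum_sub_distrib]
    have h1 : ∀ i ∈ Finset.range N,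
        ind (η ((i : ℤ) + 1)) - ind (shf η ((i : ℤ) + 1)) = w (i + 1) - w i := by
      intro i _
      have e1 : shf η ((i : ℤ) + 1) = η (i : ℤ) := by simp [shf]
      have e2 : ((i + 1 : ℕ) : ℤ) = (i : ℤ) + 1 := by push_cast; ring
      simp only [hw, e1, e2]
    rw [Finset.sum_congr rfl h1, Finset.sum_range_sub (fun k => w k) N]
  have : SFc N (shf η) - SFc N η = -(w N - w 0) := by rw [← key]; ring
  rw [this, abs_neg]
  calc |w N - w 0| ≤ 1 := abs_ind_sub_le _ _
    _ ≤ 2 := by norm_num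

lemma SBc_shf_bound (η : X) (N : ℕ) : |SBc N (shf η) - SBc N η| ≤ 2 := by
  set w : ℕ → ℝ := fun k => ind (η (-(k : ℤ) - 1)) with hw
  have key : SBc N (shf η) - SBc N η = w N - w 0 := by
    rw [SBc_def, SBc_def, ← Finset.sum_sub_distrib]
    have h1 : ∀ i ∈ Finset.range N,
        ind (shf η (-(i : ℤ) - 1)) - ind (η (-(i : ℤ) - 1)) = w (i + 1) - w i := by
      intro i _
      have e1 : shf η (-(i : ℤ) - 1) = η (-((i + 1 : ℕ) : ℤ) - 1) := by
        simp only [shf]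
        congr 1
        push_cast; ring
      simp only [hw, e1]
    rw [Finset.sum_congr rfl h1, Finset.sum_range_sub (fun k => w k) N]
  rw [key]
  calc |w N - w 0| ≤ 1 := abs_ind_sub_le _ _
    _ ≤ 2 := by norm_num

end Conservation
section ZeroOne

lemma TISF_cond (μ : Measure X) (hTI : TIF μ) {A : Set X} (hA : MeasurableSet A)
    (hsh : shf ⁻¹' A = A) (hb : (μ.restrict A).bind QF = μ.restrict A)
    (h0 : μ A ≠ 0) (htop : μ A ≠ ⊤) :
    TISF ((μ A)⁻¹ • μ.restrict A) := by
  refine ⟨⟨?_, ?_⟩, ?_⟩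
  · constructor
    rw [Measure.smul_apply, Measure.restrict_apply MeasurableSet.univ, Set.univ_inter,
      smul_eq_mul, ENNReal.inv_mul_cancel h0 htop]
  · rw [Measure.map_smul]
    congr 1
    ext s hs
    rw [Measure.map_apply measurable_shf hs, Measure.restrict_apply (measurable_shf hs),
        Measure.restrict_apply hs]
    have h1 : shf ⁻¹' s ∩ A = shf ⁻¹' (s ∩ A) := by rw [Set.preimage_inter, hsh]
    rw [h1, ← Measure.map_apply measurable_shf (hs.inter hA), hTI.2]
  · ext s hs
    rw [Measure.bind_apply hs measurable_QF.aemeasurable, lintegral_smul_measure,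
      ← Measure.bind_apply hs measurable_QF.aemeasurable, hb, Measure.smul_apply, smul_eq_mul]

lemma zero_one (μ : Measure X) (hμ : ETISF μ) {A : Set X} (hA : MeasurableSet A)
    (hsh : shf ⁻¹' A = A)
    (hbA : (μ.restrict A).bind QF = μ.restrict A)
    (hbAc : (μ.restrict Aᶜ).bind QF = μ.restrict Aᶜ) :
    μ A = 0 ∨ μ A = 1 := by
  haveI : IsProbabilityMeasure μ := hμ.1.1.1
  by_contra hcon
  push_neg at hcon
  obtain ⟨h0, h1⟩ := hcon
  have hlt1 : μ A < 1 := lt_of_le_of_ne prob_le_one h1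
  have hpos : 0 < μ A := pos_iff_ne_zero.mpr h0
  have hAtop : μ A ≠ ⊤ := measure_ne_top μ A
  have hcompl : μ Aᶜ = 1 - μ A := prob_compl_eq_one_sub hA
  have hcpos : μ Aᶜ ≠ 0 := by
    rw [hcompl]
    intro h
    exact absurd (tsub_eq_zero_iff_le.mp h) (not_le.mpr hlt1)
  have hctop : μ Aᶜ ≠ ⊤ := measure_ne_top μ Aᶜ
  have hshc : shf ⁻¹' Aᶜ = Aᶜ := by rw [Set.preimage_compl, hsh]
  have t1 := TISF_cond μ hμ.1.1 hA hsh hbA h0 hAtop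
  have t2 := TISF_cond μ hμ.1.1 hA.compl hshc hbAc hcpos hctop
  have hdec : μ = (μ A) • ((μ A)⁻¹ • μ.restrict A) +
      (1 - μ A) • ((μ Aᶜ)⁻¹ • μ.restrict Aᶜ) := by
    ext s hs
    rw [Measure.add_apply, Measure.smul_apply, Measure.smul_apply, Measure.smul_apply,
      Measure.smul_apply, Measure.restrict_apply hs, Measure.restrict_apply hs,
      smul_eq_mul, smul_eq_mul, smul_eq_mul, smul_eq_mul, ← hcompl,
      ← mul_assoc, ← mul_assoc, ENNReal.mul_inv_cancel h0 hAtop,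
      ENNReal.mul_inv_cancel hcpos hctop, one_mul, one_mul, ← Set.diff_eq]
    exact (measure_inter_add_diff s hA).symm
  have heq := hμ.2 _ _ t1 t2 (μ A) hpos hlt1 hdec
  have hP : ((μ A)⁻¹ • μ.restrict A) A = μ A := by rw [heq]
  rw [Measure.smul_apply, Measure.restrict_apply_self, smul_eq_mul,
    ENNReal.inv_mul_cancel h0 hAtop] at hP
  exact h1 hP.symm

lemma restrict_bind_of_pathwise (μ : Measure X) (hstat : μ.bind QF = μ) {A : Set X}
    (hA : MeasurableSet A) (hinv : ∀ η α, fstep η α ∈ A ↔ η ∈ A) :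
    (μ.restrict A).bind QF = μ.restrict A := by
  ext s hs
  rw [Measure.bind_apply hs measurable_QF.aemeasurable, Measure.restrict_apply hs]
  have e1 : ∀ η ∈ A, QF η s = QF η (s ∩ A) := by
    intro η hη
    have hz : QF η (s \ A) = 0 := by
      rw [QF_apply η (hs.diff hA)]
      have he : fstep η ⁻¹' (s \ A) = ∅ := by
        ext α
        simp only [Set.mem_preimage, Set.mem_diff, Set.mem_empty_iff_false, iff_false, not_and]
        intro _ hna
        exact hna ((hinv η α).mpr hη)
      rw [he]; simp
    rw [← measure_inter_add_diff (μ := QF η) s hA, hz, add_zero]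
  have e2 : ∀ η ∈ Aᶜ, QF η (s ∩ A) = 0 := by
    intro η hη
    rw [QF_apply η (hs.inter hA)]
    have he : fstep η ⁻¹' (s ∩ A) = ∅ := by
      ext α
      simp only [Set.mem_preimage, Set.mem_inter_iff, Set.mem_empty_iff_false, iff_false, not_and]
      intro _ hmem
      exact absurd ((hinv η α).mp hmem) hη
    rw [he]; simp
  have hsplit := lintegral_add_compl (μ := μ) (fun η => QF η (s ∩ A)) hA
  have hz2 : ∫⁻ η in Aᶜ, QF η (s ∩ A) ∂μ = 0 := by
    rw [setLIntegral_congr_fun_ae hA.compl (Filter.Eventually.of_forall fun η hη => e2 η hη)]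
    simp
  have htot : ∫⁻ η, QF η (s ∩ A) ∂μ = μ (s ∩ A) := by
    rw [← Measure.bind_apply (hs.inter hA) measurable_QF.aemeasurable, hstat]
  calc ∫⁻ η, QF η s ∂(μ.restrict A)
      = ∫⁻ η in A, QF η (s ∩ A) ∂μ :=
        setLIntegral_congr_fun_ae hA (Filter.Eventually.of_forall fun η hη => e1 η hη)
    _ = μ (s ∩ A) := by rw [← htot, ← hsplit, hz2, add_zero]

/-- 0-1 law for pathwise bi-invariant, shift-invariant events. -/
lemma zero_one_pathwise (μ : Measure X) (hμ : ETISF μ) {A : Set X} (hA : MeasurableSet A)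
    (hsh : shf ⁻¹' A = A) (hinv : ∀ η α, fstep η α ∈ A ↔ η ∈ A) :
    μ A = 0 ∨ μ A = 1 := by
  have hstat : μ.bind QF = μ := hμ.1.2
  refine zero_one μ hμ hA hsh (restrict_bind_of_pathwise μ hstat hA hinv)
    (restrict_bind_of_pathwise μ hstat hA.compl ?_)
  intro η α
  exact not_congr (hinv η α)

end ZeroOne
section Maximal

variable {Ω : Type*} [MeasurableSpace Ω]

/-- Birkhoff sums. -/
def bsum (T : Ω → Ω) (g : Ω → ℝ) (n : ℕ) (x : Ω) : ℝ := ∑ i ∈ Finset.range n, g (T^[i] x)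

/-- Running maxima of Birkhoff sums, including the empty sum `0`. -/
def bmax (T : Ω → Ω) (g : Ω → ℝ) : ℕ → Ω → ℝ
  | 0, _ => 0
  | (N + 1), x => max (bmax T g N x) (bsum T g (N + 1) x)

lemma bsum_succ (T : Ω → Ω) (g : Ω → ℝ) (n : ℕ) (x : Ω) :
    bsum T g (n + 1) x = g x + bsum T g n (T x) := by
  rw [bsum, Finset.sum_range_succ']
  simp only [Function.iterate_succ_apply, Function.iterate_zero_apply]
  rw [add_comm]
  rfl

lemma bmax_nonneg (T : Ω → Ω) (g : Ω → ℝ) (N : ℕ) (x : Ω) : 0 ≤ bmax T g N x := by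
  induction N with
  | zero => exact le_refl 0
  | succ N ih => exact le_trans ih (le_max_left _ _)

lemma bmax_mono (T : Ω → Ω) (g : Ω → ℝ) (x : Ω) : Monotone fun N => bmax T g N x :=
  monotone_nat_of_le_succ fun N => le_max_left _ _

lemma bsum_le_bmax (T : Ω → Ω) (g : Ω → ℝ) {n N : ℕ} (h : n ≤ N) (x : Ω) :
    bsum T g n x ≤ bmax T g N x := by
  induction N with
  | zero =>
    have : n = 0 := Nat.le_zero.mp h
    subst this
    simp [bsum, bmax]
  | succ N ih =>
    rcases Nat.lt_or_ge n (N + 1) with h' | h'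
    · exact le_trans (ih (Nat.lt_succ_iff.mp h')) (le_max_left _ _)
    · have : n = N + 1 := le_antisymm h h'
      subst this
      exact le_max_right _ _

lemma bmax_succ_le (T : Ω → Ω) (g : Ω → ℝ) (N : ℕ) (x : Ω) :
    bmax T g (N + 1) x ≤ max 0 (g x + bmax T g N (T x)) := by
  induction N with
  | zero =>
    have : bsum T g 1 x = g x := by
      rw [bsum_succ]; simp [bsum]
    simp [bmax, this]
  | succ N ih =>
    show max (bmax T g (N + 1) x) (bsum T g (N + 2) x) ≤ _
    apply max_le
    · exact le_trans ih (max_le_max (le_refl 0)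
        (add_le_add_right (bmax_mono T g (T x) (Nat.le_succ N)) _))
    · rw [bsum_succ]
      exact le_trans (add_le_add_right (bsum_le_bmax T g (le_refl (N + 1)) (T x)) _)
        (le_max_right _ _)

lemma bmax_key (T : Ω → Ω) (g : Ω → ℝ) (N : ℕ) (x : Ω) (hx : 0 < bmax T g (N + 1) x) :
    bmax T g (N + 1) x ≤ g x + bmax T g (N + 1) (T x) := by
  have h := bmax_succ_le T g N x
  by_cases hc : 0 ≤ g x + bmax T g N (T x)
  · rw [max_eq_right hc] at h
    exact le_trans h (add_le_add_right (bmax_mono T g (T x) (Nat.le_succ N)) _)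
  · rw [max_eq_left (le_of_not_ge hc)] at h
    linarith
lemma measurable_bsum {T : Ω → Ω} {g : Ω → ℝ} (hT : Measurable T) (hg : Measurable g) (n : ℕ) :
    Measurable (bsum T g n) :=
  Finset.measurable_sum _ fun i _ => hg.comp (hT.iterate i)

lemma measurable_bmax {T : Ω → Ω} {g : Ω → ℝ} (hT : Measurable T) (hg : Measurable g) (N : ℕ) :
    Measurable (bmax T g N) := by
  induction N with
  | zero => exact measurable_const
  | succ N ih => exact Measurable.max ih (measurable_bsum hT hg (N + 1))

lemma bsum_bound {T : Ω → Ω} {g : Ω → ℝ} {C : ℝ} (hb : ∀ x, |g x| ≤ C) (n : ℕ) (x : Ω) :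
    |bsum T g n x| ≤ n * C := by
  calc |bsum T g n x| ≤ ∑ i ∈ Finset.range n, |g (T^[i] x)| :=
        Finset.abs_sum_le_sum_abs _ _
    _ ≤ ∑ i ∈ Finset.range n, C := Finset.sum_le_sum fun i _ => hb _
    _ = n * C := by rw [Finset.sum_const, Finset.card_range, nsmul_eq_mul]

lemma bmax_bound {T : Ω → Ω} {g : Ω → ℝ} {C : ℝ} (hC : 0 ≤ C) (hb : ∀ x, |g x| ≤ C)
    (N : ℕ) (x : Ω) : |bmax T g N x| ≤ N * C := by
  rw [abs_of_nonneg (bmax_nonneg T g N x)]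
  induction N with
  | zero => simp [bmax]
  | succ N ih =>
    apply max_le
    · exact le_trans ih (by push_cast; nlinarith)
    · exact le_trans (le_abs_self _) (bsum_bound hb (N + 1) x)

lemma integrable_of_bdd {μ : Measure Ω} [IsFiniteMeasure μ] {f : Ω → ℝ} (hf : Measurable f)
    {C : ℝ} (h : ∀ x, |f x| ≤ C) : Integrable f μ :=
  Integrable.mono' (integrable_const C) hf.aestronglyMeasurable
    (Filter.Eventually.of_forall fun x => by rw [Real.norm_eq_abs]; exact h x)

/-- Garsia's maximal ergodic lemma, in the form we need. -/
lemma maximal_ergodic (μ : Measure Ω) [IsProbabilityMeasure μ] (T : Ω → Ω)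
    (hT : Measurable T) (hTm : μ.map T = μ) (g : Ω → ℝ) (hg : Measurable g)
    (C : ℝ) (hC : 0 ≤ C) (hb : ∀ x, |g x| ≤ C)
    (hae : ∀ᵐ x ∂μ, ∃ n, 1 ≤ n ∧ 0 < bsum T g n x) :
    0 ≤ ∫ x, g x ∂μ := by
  set E : ℕ → Set Ω := fun N => {x | 0 < bmax T g (N + 1) x} with hE
  have hmE : ∀ N, MeasurableSet (E N) := fun N =>
    measurableSet_lt measurable_const (measurable_bmax hT hg (N + 1))
  have hEmono : Monotone E := fun a b hab x hx =>
    lt_of_lt_of_le hx (bmax_mono T g x (Nat.succ_le_succ hab))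
  have hint_g : Integrable g μ := integrable_of_bdd hg hb
  have hint_Φ : ∀ N, Integrable (bmax T g N) μ := fun N =>
    integrable_of_bdd (measurable_bmax hT hg N) (bmax_bound hC hb N)
  have hint_ΦT : ∀ N, Integrable (fun x => bmax T g N (T x)) μ := fun N =>
    integrable_of_bdd ((measurable_bmax hT hg N).comp hT) (fun x => bmax_bound hC hb N (T x))
  have step1 : ∀ N, 0 ≤ ∫ x in E N, g x ∂μ := by
    intro N
    have hpt : ∀ x ∈ E N, bmax T g (N + 1) x ≤ g x + bmax T g (N + 1) (T x) :=
      fun x hx => bmax_key T g N x hx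
    have h2 : ∫ x in E N, bmax T g (N + 1) x ∂μ ≤
        ∫ x in E N, (g x + bmax T g (N + 1) (T x)) ∂μ :=
      setIntegral_mono_on (hint_Φ (N + 1)).integrableOn
        ((hint_g.add (hint_ΦT (N + 1))).integrableOn) (hmE N) hpt
    have h3 : ∫ x in E N, (g x + bmax T g (N + 1) (T x)) ∂μ =
        ∫ x in E N, g x ∂μ + ∫ x in E N, bmax T g (N + 1) (T x) ∂μ :=
      integral_add hint_g.integrableOn (hint_ΦT (N + 1)).integrableOn
    have h4 : ∫ x in E N, bmax T g (N + 1) (T x) ∂μ ≤ ∫ x, bmax T g (N + 1) (T x) ∂μ :=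
      setIntegral_le_integral (hint_ΦT (N + 1))
        (Filter.Eventually.of_forall fun x => bmax_nonneg T g (N + 1) (T x))
    have h5 : ∫ x, bmax T g (N + 1) (T x) ∂μ = ∫ x, bmax T g (N + 1) x ∂μ := by
      conv_rhs => rw [← hTm]
      rw [integral_map hT.aemeasurable (measurable_bmax hT hg (N + 1)).aestronglyMeasurable]
    have h6 : ∫ x in E N, bmax T g (N + 1) x ∂μ = ∫ x, bmax T g (N + 1) x ∂μ := by
      have hz : ∫ x in (E N)ᶜ, bmax T g (N + 1) x ∂μ = 0 := by
        have h0 : ∀ x ∈ (E N)ᶜ, bmax T g (N + 1) x = 0 := fun x hx =>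
          le_antisymm (not_lt.mp hx) (bmax_nonneg T g (N + 1) x)
        rw [setIntegral_congr_fun (hmE N).compl h0]
        simp
      rw [← integral_add_compl (hmE N) (hint_Φ (N + 1)), hz, add_zero]
    linarith
  set U : Set Ω := ⋃ N, E N with hU
  have hmU : MeasurableSet U := MeasurableSet.iUnion hmE
  have hUae : ∀ᵐ x ∂μ, x ∈ U := by
    filter_upwards [hae] with x hx
    obtain ⟨n, hn1, hpos⟩ := hx
    obtain ⟨m, rfl⟩ : ∃ m, n = m + 1 := ⟨n - 1, (Nat.succ_pred_eq_of_pos hn1).symm⟩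
    exact Set.mem_iUnion.mpr ⟨m, lt_of_lt_of_le hpos (bsum_le_bmax T g (le_refl (m + 1)) x)⟩
  have hUc : μ Uᶜ = 0 := by
    have := hUae
    rw [Filter.Eventually] at this
    exact ae_iff.mp hUae
  have hconv : Tendsto (fun N => ∫ x in E N, g x ∂μ) atTop (nhds (∫ x in U, g x ∂μ)) :=
    tendsto_setIntegral_of_monotone hmE hEmono hint_g.integrableOn
  have hlim : 0 ≤ ∫ x in U, g x ∂μ := ge_of_tendsto' hconv step1
  have hfull : ∫ x in U, g x ∂μ = ∫ x, g x ∂μ := by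
    rw [← integral_add_compl hmU hint_g]
    have : ∫ x in Uᶜ, g x ∂μ = 0 := by
      rw [Measure.restrict_eq_zero.mpr hUc]
      simp
    rw [this, add_zero]
  linarith

end Maximal
section Density

/-- "Frequently the window average exceeds `s`" (robust version). -/
def AEvF (S : ℕ → X → ℝ) (s : ℚ) : Set X :=
  {η | ∃ t : ℚ, s < t ∧ ∃ᶠ N in atTop, (t : ℝ) * N ≤ S N η}

/-- "Frequently the window average is below `s`" (robust version). -/
def BEvF (S : ℕ → X → ℝ) (s : ℚ) : Set X :=
  {η | ∃ t : ℚ, t < s ∧ ∃ᶠ N in atTop, S N η ≤ (t : ℝ) * N}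

lemma freqA_stable {u v : ℕ → ℝ} (h : ∀ N, |u N - v N| ≤ 2) {s : ℚ}
    (hv : ∃ t : ℚ, s < t ∧ ∃ᶠ N in atTop, (t : ℝ) * N ≤ v N) :
    ∃ t : ℚ, s < t ∧ ∃ᶠ N in atTop, (t : ℝ) * N ≤ u N := by
  obtain ⟨t, hst, hf⟩ := hv
  have hst2 : s < (s + t) / 2 := by linarith
  refine ⟨(s + t) / 2, hst2, ?_⟩
  rw [Filter.frequently_atTop] at hf ⊢
  intro M
  set d : ℝ := (t : ℝ) - (((s + t) / 2 : ℚ) : ℝ) with hd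
  have hdpos : (0 : ℝ) < d := by
    rw [hd]
    push_cast
    have : (s : ℝ) < t := by exact_mod_cast hst
    linarith
  obtain ⟨N, hN, hle⟩ := hf (max M ⌈(2 : ℝ) / d⌉₊)
  refine ⟨N, le_trans (le_max_left _ _) hN, ?_⟩
  have hNM0 : ((⌈(2 : ℝ) / d⌉₊ : ℕ) : ℝ) ≤ N := by
    exact_mod_cast le_trans (le_max_right _ _) hN
  have h2N : (2 : ℝ) / d ≤ N := le_trans (Nat.le_ceil _) hNM0
  have h3 : (2 : ℝ) ≤ d * N := by
    rw [div_le_iff₀ hdpos] at h2N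
    linarith
  have h4 := (abs_le.mp (h N)).1
  have h5 : d * N = (t : ℝ) * N - (((s + t) / 2 : ℚ) : ℝ) * N := by rw [hd]; ring
  rw [h5] at h3
  linarith

lemma freqB_stable {u v : ℕ → ℝ} (h : ∀ N, |u N - v N| ≤ 2) {s : ℚ}
    (hv : ∃ t : ℚ, t < s ∧ ∃ᶠ N in atTop, v N ≤ (t : ℝ) * N) :
    ∃ t : ℚ, t < s ∧ ∃ᶠ N in atTop, u N ≤ (t : ℝ) * N := by
  obtain ⟨t, hst, hf⟩ := hv
  have hst2 : (s + t) / 2 < s := by linarith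
  refine ⟨(s + t) / 2, hst2, ?_⟩
  rw [Filter.frequently_atTop] at hf ⊢
  intro M
  set d : ℝ := (((s + t) / 2 : ℚ) : ℝ) - (t : ℝ) with hd
  have hdpos : (0 : ℝ) < d := by
    rw [hd]
    push_cast
    have : (t : ℝ) < s := by exact_mod_cast hst
    linarith
  obtain ⟨N, hN, hle⟩ := hf (max M ⌈(2 : ℝ) / d⌉₊)
  refine ⟨N, le_trans (le_max_left _ _) hN, ?_⟩
  have hNM0 : ((⌈(2 : ℝ) / d⌉₊ : ℕ) : ℝ) ≤ N := by
    exact_mod_cast le_trans (le_max_right _ _) hN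
  have h2N : (2 : ℝ) / d ≤ N := le_trans (Nat.le_ceil _) hNM0
  have h3 : (2 : ℝ) ≤ d * N := by
    rw [div_le_iff₀ hdpos] at h2N
    linarith
  have h4 := (abs_le.mp (h N)).2
  have h5 : d * N = (((s + t) / 2 : ℚ) : ℝ) * N - (t : ℝ) * N := by rw [hd]; ring
  rw [h5] at h3
  linarith

lemma AEv_iff {S : ℕ → X → ℝ} {η η' : X} (h : ∀ N, |S N η' - S N η| ≤ 2) (s : ℚ) :
    η' ∈ AEvF S s ↔ η ∈ AEvF S s :=
  ⟨fun hm => freqA_stable (fun N => by have := h N; rwa [abs_sub_comm] at this) hm,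
   fun hm => freqA_stable h hm⟩

lemma BEv_iff {S : ℕ → X → ℝ} {η η' : X} (h : ∀ N, |S N η' - S N η| ≤ 2) (s : ℚ) :
    η' ∈ BEvF S s ↔ η ∈ BEvF S s :=
  ⟨fun hm => freqB_stable (fun N => by have := h N; rwa [abs_sub_comm] at this) hm,
   fun hm => freqB_stable h hm⟩

lemma measurable_AEv {S : ℕ → X → ℝ} (hS : ∀ N, Measurable (S N)) (s : ℚ) :
    MeasurableSet (AEvF S s) := by
  have he : AEvF S s = ⋃ t : ℚ, ⋃ (_ : s < t), ⋂ M : ℕ, ⋃ N : ℕ, ⋃ (_ : M ≤ N),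
      {η | (t : ℝ) * N ≤ S N η} := by
    ext η
    simp only [AEvF, Set.mem_setOf_eq, Set.mem_iUnion, Set.mem_iInter, Filter.frequently_atTop]
    constructor
    · rintro ⟨t, hst, hfr⟩
      exact ⟨t, hst, fun M => by obtain ⟨N, hN, hle⟩ := hfr M; exact ⟨N, hN, hle⟩⟩
    · rintro ⟨t, hst, hfr⟩
      exact ⟨t, hst, fun M => by obtain ⟨N, hN, hle⟩ := hfr M; exact ⟨N, hN, hle⟩⟩
  rw [he]
  exact MeasurableSet.iUnion fun t => MeasurableSet.iUnion fun _ =>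
    MeasurableSet.iInter fun M => MeasurableSet.iUnion fun N => MeasurableSet.iUnion fun _ =>
      measurableSet_le measurable_const (hS N)

lemma measurable_BEv {S : ℕ → X → ℝ} (hS : ∀ N, Measurable (S N)) (s : ℚ) :
    MeasurableSet (BEvF S s) := by
  have he : BEvF S s = ⋃ t : ℚ, ⋃ (_ : t < s), ⋂ M : ℕ, ⋃ N : ℕ, ⋃ (_ : M ≤ N),
      {η | S N η ≤ (t : ℝ) * N} := by
    ext η
    simp only [BEvF, Set.mem_setOf_eq, Set.mem_iUnion, Set.mem_iInter, Filter.frequently_atTop]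
    constructor
    · rintro ⟨t, hst, hfr⟩
      exact ⟨t, hst, fun M => by obtain ⟨N, hN, hle⟩ := hfr M; exact ⟨N, hN, hle⟩⟩
    · rintro ⟨t, hst, hfr⟩
      exact ⟨t, hst, fun M => by obtain ⟨N, hN, hle⟩ := hfr M; exact ⟨N, hN, hle⟩⟩
  rw [he]
  exact MeasurableSet.iUnion fun t => MeasurableSet.iUnion fun _ =>
    MeasurableSet.iInter fun M => MeasurableSet.iUnion fun N => MeasurableSet.iUnion fun _ =>
      measurableSet_le (hS N) measurable_const

lemma bsum_sub_const (T : X → X) (f : X → ℝ) (c : ℝ) (n : ℕ) (x : X) :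
    bsum T (fun y => f y - c) n x = bsum T f n x - n * c := by
  simp [bsum, Finset.sum_sub_distrib, Finset.sum_const, Finset.card_range, nsmul_eq_mul]

lemma bsum_const_sub (T : X → X) (f : X → ℝ) (c : ℝ) (n : ℕ) (x : X) :
    bsum T (fun y => c - f y) n x = n * c - bsum T f n x := by
  simp [bsum, Finset.sum_sub_distrib, Finset.sum_const, Finset.card_range, nsmul_eq_mul]

/-- The central a.e.-convergence lemma: under extremality the empirical averages
along a measure-preserving `T` matching the window counts `S` converge to `∫ f`. -/
lemma density_half (μ : Measure X) (hμ : ETISF μ)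
    (S : ℕ → X → ℝ) (hSmeas : ∀ N, Measurable (S N))
    (T : X → X) (hT : Measurable T) (hTm : μ.map T = μ)
    (f : X → ℝ) (hf : Measurable f) (hf0 : ∀ η, 0 ≤ f η) (hf1 : ∀ η, f η ≤ 1)
    (hrel : ∀ n η, bsum T f n η = S n η)
    (hfstep : ∀ η α N, |S N (fstep η α) - S N η| ≤ 2)
    (hshfS : ∀ η N, |S N (shf η) - S N η| ≤ 2) :
    ∀ᵐ η ∂μ, Tendsto (fun N : ℕ => S N η / N) atTop (nhds (∫ x, f x ∂μ)) := by
  haveI : IsProbabilityMeasure μ := hμ.1.1.1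
  set ρ : ℝ := ∫ x, f x ∂μ with hρ
  have hfint : Integrable f μ :=
    integrable_of_bdd hf (C := 1) fun x => abs_le.mpr ⟨by linarith [hf0 x], hf1 x⟩
  -- upper events are null
  have hupper : ∀ s : ℚ, ρ < (s : ℝ) → μ (AEvF S s) = 0 := by
    intro s hs
    rcases zero_one_pathwise μ hμ (measurable_AEv hSmeas s)
        (Set.ext fun η => AEv_iff (fun N => hshfS η N) s)
        (fun η α => AEv_iff (fun N => hfstep η α N) s) with h0 | h1
    · exact h0
    · exfalso
      have hae : ∀ᵐ η ∂μ, η ∈ AEvF S s := by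
        have hc : μ (AEvF S s)ᶜ = 0 := by
          rw [prob_compl_eq_one_sub (measurable_AEv hSmeas s), h1, tsub_self]
        exact ae_iff.mpr hc
      have hmax := maximal_ergodic μ T hT hTm (fun η => f η - s)
        (hf.sub measurable_const) (|(s : ℝ)| + 1)
        (by positivity)
        (fun x => by
          have h1' := hf0 x
          have h2' := hf1 x
          have h3' := le_abs_self (s : ℝ)
          have h4' := neg_abs_le (s : ℝ)
          rw [abs_le]
          constructor <;> linarith)
        ?_
      · have hint : ∫ x, (f x - (s : ℝ)) ∂μ = ρ - s := by
          rw [integral_sub hfint (integrable_const _), integral_const]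
          simp [hρ]
        rw [hint] at hmax
        linarith
      · filter_upwards [hae] with η hη
        obtain ⟨t, hst, hfr⟩ := hη
        rw [Filter.frequently_atTop] at hfr
        obtain ⟨N, hN1, hle⟩ := hfr 1
        refine ⟨N, hN1, ?_⟩
        rw [bsum_sub_const, hrel]
        have hts : (s : ℝ) < t := by exact_mod_cast hst
        have hN1' : (1 : ℝ) ≤ N := by exact_mod_cast hN1
        nlinarith
  -- lower events are null
  have hlower : ∀ s : ℚ, (s : ℝ) < ρ → μ (BEvF S s) = 0 := by
    intro s hs
    rcases zero_one_pathwise μ hμ (measurable_BEv hSmeas s)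
        (Set.ext fun η => BEv_iff (fun N => hshfS η N) s)
        (fun η α => BEv_iff (fun N => hfstep η α N) s) with h0 | h1
    · exact h0
    · exfalso
      have hae : ∀ᵐ η ∂μ, η ∈ BEvF S s := by
        have hc : μ (BEvF S s)ᶜ = 0 := by
          rw [prob_compl_eq_one_sub (measurable_BEv hSmeas s), h1, tsub_self]
        exact ae_iff.mpr hc
      have hmax := maximal_ergodic μ T hT hTm (fun η => (s : ℝ) - f η)
        ((measurable_const).sub hf) (|(s : ℝ)| + 1)
        (by positivity)
        (fun x => by
          have h1' := hf0 x
          have h2' := hf1 x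
          have h3' := le_abs_self (s : ℝ)
          have h4' := neg_abs_le (s : ℝ)
          rw [abs_le]
          constructor <;> linarith)
        ?_
      · have hint : ∫ x, ((s : ℝ) - f x) ∂μ = s - ρ := by
          rw [integral_sub (integrable_const _) hfint, integral_const]
          simp [hρ]
        rw [hint] at hmax
        linarith
      · filter_upwards [hae] with η hη
        obtain ⟨t, hst, hfr⟩ := hη
        rw [Filter.frequently_atTop] at hfr
        obtain ⟨N, hN1, hle⟩ := hfr 1
        refine ⟨N, hN1, ?_⟩
        rw [bsum_const_sub, hrel]
        have hts : (t : ℝ) < s := by exact_mod_cast hst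
        have hN1' : (1 : ℝ) ≤ N := by exact_mod_cast hN1
        nlinarith
  -- combine
  have hAae : ∀ᵐ η ∂μ, ∀ s : ℚ, ρ < (s : ℝ) → η ∉ AEvF S s := by
    rw [ae_all_iff]
    intro s
    by_cases hs : ρ < (s : ℝ)
    · filter_upwards [(measure_eq_zero_iff_ae_notMem.mp (hupper s hs))] with η hη
      exact fun _ => hη
    · exact Filter.Eventually.of_forall fun η h => absurd h hs
  have hBae : ∀ᵐ η ∂μ, ∀ s : ℚ, (s : ℝ) < ρ → η ∉ BEvF S s := by
    rw [ae_all_iff]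
    intro s
    by_cases hs : (s : ℝ) < ρ
    · filter_upwards [(measure_eq_zero_iff_ae_notMem.mp (hlower s hs))] with η hη
      exact fun _ => hη
    · exact Filter.Eventually.of_forall fun η h => absurd h hs
  filter_upwards [hAae, hBae] with η hA hB
  rw [tendsto_order]
  constructor
  · -- ∀ b < ρ, eventually b < S N η / N
    intro b hb
    obtain ⟨s, hs1, hs2⟩ := exists_rat_btwn hb
    obtain ⟨t, ht1, ht2⟩ := exists_rat_btwn hs1
    have hnB := hB s hs2
    have hts : t < s := by exact_mod_cast ht2
    have hnofreq : ¬ ∃ᶠ N in atTop, S N η ≤ (t : ℝ) * N := fun hfr => hnB ⟨t, hts, hfr⟩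
    have hev := Filter.not_frequently.mp hnofreq
    filter_upwards [hev, Filter.eventually_ge_atTop 1] with N hN hN1
    push_neg at hN
    have hN0 : (0 : ℝ) < N := by exact_mod_cast hN1
    rw [lt_div_iff₀ hN0]
    calc b * N ≤ (t : ℝ) * N := by nlinarith [le_of_lt ht1]
      _ < S N η := hN
  · intro b hb
    obtain ⟨s, hs1, hs2⟩ := exists_rat_btwn hb
    obtain ⟨t, ht1, ht2⟩ := exists_rat_btwn hs2
    have hnA := hA s hs1
    have hst : s < t := by exact_mod_cast ht1
    have hnofreq : ¬ ∃ᶠ N in atTop, (t : ℝ) * N ≤ S N η := fun hfr => hnA ⟨t, hst, hfr⟩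
    have hev := Filter.not_frequently.mp hnofreq
    filter_upwards [hev, Filter.eventually_ge_atTop 1] with N hN hN1
    push_neg at hN
    have hN0 : (0 : ℝ) < N := by exact_mod_cast hN1
    rw [div_lt_iff₀ hN0]
    calc S N η < (t : ℝ) * N := hN
      _ ≤ b * N := by nlinarith [le_of_lt ht2]

end Density
section FrozenAndAssembly

lemma map_shfInv (μ : Measure X) (h : μ.map shf = μ) : μ.map shfInv = μ := by
  conv_lhs => rw [← h]
  rw [Measure.map_map measurable_shfInv measurable_shf]
  have he : shfInv ∘ shf = id := funext shfInv_shf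
  rw [he, Measure.map_id]

lemma map_shf2 (μ : Measure X) (h : μ.map shf = μ) : μ.map (shf ∘ shf) = μ := by
  rw [← Measure.map_map measurable_shf measurable_shf, h, h]

lemma shfInv_iter (i : ℕ) (η : X) (j : ℤ) : (shfInv^[i] η) j = η (j + i) := by
  induction i generalizing η j with
  | zero => simp
  | succ i ih =>
    rw [Function.iterate_succ_apply, ih]
    show η (j + i + 1) = η (j + (i + 1 : ℕ))
    congr 1
    push_cast
    ring

lemma shf_iter (i : ℕ) (η : X) (j : ℤ) : (shf^[i] η) j = η (j - i) := by
  induction i generalizing η j with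
  | zero => simp
  | succ i ih =>
    rw [Function.iterate_succ_apply, ih]
    show η (j - i - 1) = η (j - (i + 1 : ℕ))
    congr 1
    push_cast
    ring

lemma bsum_SFc (n : ℕ) (η : X) : bsum shfInv (fun η => ind (η 1)) n η = SFc n η := by
  rw [bsum, SFc_def]
  apply Finset.sum_congr rfl
  intro i _
  rw [shfInv_iter]
  have e : (1 : ℤ) + i = (i : ℤ) + 1 := by ring
  rw [e]

lemma bsum_SBc (n : ℕ) (η : X) : bsum shf (fun η => ind (η (-1))) n η = SBc n η := by
  rw [bsum, SBc_def]
  apply Finset.sum_congr rfl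
  intro i _
  rw [shf_iter]
  have e : (-1 : ℤ) - i = -(i : ℤ) - 1 := by ring
  rw [e]

lemma measurable_ind_eval (j : ℤ) : Measurable fun η : X => ind (η j) :=
  (measurable_from_top (f := ind)).comp (measurable_pi_apply j)

lemma integral_back_eq (μ : Measure X) (h : μ.map shf = μ) :
    ∫ η, ind (η (-1)) ∂μ = ∫ η, ind (η 1) ∂μ := by
  have hm2 : Measurable (shf ∘ shf) := measurable_shf.comp measurable_shf
  have key : ∫ y, ind (y 1) ∂(μ.map (shf ∘ shf)) = ∫ x, ind (((shf ∘ shf) x) 1) ∂μ :=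
    integral_map hm2.aemeasurable (measurable_ind_eval 1).aestronglyMeasurable
  rw [map_shf2 μ h] at key
  have he2 : ∫ x, ind (((shf ∘ shf) x) 1) ∂μ = ∫ η, ind (η (-1)) ∂μ := by
    apply integral_congr_ae
    apply Filter.Eventually.of_forall
    intro η
    simp only [Function.comp_apply, shf]
    have e : (1 : ℤ) - 1 - 1 = -1 := by ring
    rw [e]
  rw [← he2, ← key]

lemma frozenF_measurable : MeasurableSet frozenF := by
  have he : frozenF = ⋂ i : ℤ, ({η : X | η i = false} ∪ {η : X | η (i + 1) = false}) := by
    ext η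
    simp [frozenF]
  rw [he]
  refine MeasurableSet.iInter fun i => MeasurableSet.union ?_ ?_
  · have h1 := measurable_truth (mbnot (measurable_pi_apply (i : ℤ) : Measurable fun η : X => η i))
    have he2 : {η : X | (!(η i)) = true} = {η : X | η i = false} := by
      ext η; simp
    rw [he2] at h1
    exact h1
  · have h1 := measurable_truth (mbnot (measurable_pi_apply (i + 1 : ℤ) : Measurable fun η : X => η (i + 1)))
    have he2 : {η : X | (!(η (i + 1))) = true} = {η : X | η (i + 1) = false} := by
      ext η; simp
    rw [he2] at h1
    exact h1

lemma frozen_shf : shf ⁻¹' frozenF = frozenF := by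
  ext η
  simp only [Set.mem_preimage, frozenF, Set.mem_setOf_eq, shf]
  constructor
  · intro h i
    have h2 := h (i + 1)
    have e1 : i + 1 - 1 = i := by ring
    have e2 : i + 1 + 1 - 1 = i + 1 := by ring
    rw [e1, e2] at h2
    exact h2
  · intro h i
    have e : i + 1 - 1 = i := by ring
    rw [e]
    have h2 := h (i - 1)
    have e1 : i - 1 + 1 = i := by ring
    rw [e1] at h2
    exact h2

lemma fstep_frozen {η : X} (hη : η ∈ frozenF) (α : X) : fstep η α = η := by
  funext i
  have hw : ∀ j, wantsR η j = false := by
    intro j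
    rcases hη (j - 1) with h | h
    · simp [wantsR, h]
    · have e : j - 1 + 1 = j := by ring
      rw [e] at h
      simp [wantsR, h]
  have hwl : ∀ j, wantsL η j = false := by
    intro j
    rcases hη j with h | h
    · simp [wantsL, h]
    · simp [wantsL, h]
  simp [fstep, jumpsR, jumpsL, hw, hwl]

lemma QF_frozen {η : X} (hη : η ∈ frozenF) {s : Set X} (hs : MeasurableSet s)
    (hcoin : coin Set.univ = 1) : QF η s = if η ∈ s then 1 else 0 := by
  rw [QF_apply η hs]
  have he : fstep η ⁻¹' s = if η ∈ s then Set.univ else ∅ := by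
    by_cases h : η ∈ s
    · simp only [h, if_true]
      ext α
      simp [fstep_frozen hη α, h]
    · simp only [h, if_false]
      ext α
      simp [fstep_frozen hη α, h]
  rw [he]
  by_cases h : η ∈ s <;> simp [h, hcoin]

lemma frozen_zero_one (μ : Measure X) (hμ : ETISF μ) : μ frozenF = 0 ∨ μ frozenF = 1 := by
  haveI : IsProbabilityMeasure μ := hμ.1.1.1
  have hstat : μ.bind QF = μ := hμ.1.2
  have hcoin := coin_univ_eq_one μ hstat
  have hF := frozenF_measurable
  have hleak : ∫⁻ η in frozenFᶜ, QF η frozenF ∂μ = 0 := by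
    have hsplit := lintegral_add_compl (μ := μ) (fun η => QF η frozenF) hF
    have htot : ∫⁻ η, QF η frozenF ∂μ = μ frozenF := by
      rw [← Measure.bind_apply hF measurable_QF.aemeasurable, hstat]
    have hFpart : ∫⁻ η in frozenF, QF η frozenF ∂μ = μ frozenF := by
      rw [setLIntegral_congr_fun_ae hF (Filter.Eventually.of_forall (fun η hη => by
        rw [QF_frozen hη hF hcoin, if_pos hη])), setLIntegral_one]
    rw [hFpart, htot] at hsplit
    have hne : μ frozenF ≠ ⊤ := measure_ne_top _ _
    exact (ENNReal.add_right_inj hne).mp (by rw [add_zero]; exact hsplit)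
  have hbF : (μ.restrict frozenF).bind QF = μ.restrict frozenF := by
    ext s hs
    rw [Measure.bind_apply hs measurable_QF.aemeasurable, Measure.restrict_apply hs]
    have hpt : ∀ η ∈ frozenF, QF η s = QF η (s ∩ frozenF) := by
      intro η hη
      rw [QF_frozen hη hs hcoin, QF_frozen hη (hs.inter hF) hcoin]
      by_cases h : η ∈ s
      · rw [if_pos h, if_pos ⟨h, hη⟩]
      · rw [if_neg h, if_neg (fun hc => h hc.1)]
    rw [setLIntegral_congr_fun_ae hF (Filter.Eventually.of_forall hpt)]
    have hsplit := lintegral_add_compl (μ := μ) (fun η => QF η (s ∩ frozenF)) hF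
    have htot : ∫⁻ η, QF η (s ∩ frozenF) ∂μ = μ (s ∩ frozenF) := by
      rw [← Measure.bind_apply (hs.inter hF) measurable_QF.aemeasurable, hstat]
    have hz : ∫⁻ η in frozenFᶜ, QF η (s ∩ frozenF) ∂μ = 0 :=
      le_antisymm (le_trans (lintegral_mono fun η =>
        measure_mono Set.inter_subset_right) (le_of_eq hleak)) zero_le
    rw [hz, add_zero, htot] at hsplit
    exact hsplit
  have hbFc : (μ.restrict frozenFᶜ).bind QF = μ.restrict frozenFᶜ := by
    ext s hs
    rw [Measure.bind_apply hs measurable_QF.aemeasurable, Measure.restrict_apply hs]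
    have hdecomp : (fun η => QF η s) =
        fun η => QF η (s ∩ frozenF) + QF η (s \ frozenF) := by
      funext η
      exact (measure_inter_add_diff (μ := QF η) s hF).symm
    rw [hdecomp, lintegral_add_left (measurable_QF_coe (hs.inter hF))]
    have h1 : ∫⁻ η in frozenFᶜ, QF η (s ∩ frozenF) ∂μ = 0 := by
      refine le_antisymm (le_trans (lintegral_mono fun η =>
        measure_mono Set.inter_subset_right) (le_of_eq hleak)) zero_le
    have h2 : ∫⁻ η in frozenFᶜ, QF η (s \ frozenF) ∂μ = μ (s \ frozenF) := by
      have hsplit2 := lintegral_add_compl (μ := μ) (fun η => QF η (s \ frozenF)) hF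
      have htot2 : ∫⁻ η, QF η (s \ frozenF) ∂μ = μ (s \ frozenF) := by
        rw [← Measure.bind_apply (hs.diff hF) measurable_QF.aemeasurable, hstat]
      have hFzero : ∫⁻ η in frozenF, QF η (s \ frozenF) ∂μ = 0 := by
        rw [setLIntegral_congr_fun_ae hF (Filter.Eventually.of_forall (fun η hη => by
          rw [QF_frozen hη (hs.diff hF) hcoin, if_neg (fun hmem => hmem.2 hη)]))]
        simp
      rw [hFzero, htot2, zero_add] at hsplit2
      exact hsplit2
    rw [h1, h2, zero_add, Set.diff_eq]
  exact zero_one μ hμ hF frozen_shf hbF hbFc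

end FrozenAndAssembly

/-- Every regular ETIS state of the F-SSEP has a definite density
`ρ ∈ [0,1]`, and gives the frozen set measure `0` or `1`. -/
theorem every_regular_ETIS_has_density_and_trivial_frozen_mass
    (μ : Measure X) (hreg : RegF μ) (hμ : ETISF μ) :
    (∃ ρ : ℝ, ρ ∈ Set.Icc (0:ℝ) 1 ∧ densF μ ρ) ∧ (μ frozenF = 0 ∨ μ frozenF = 1) := by
  haveI : IsProbabilityMeasure μ := hμ.1.1.1
  have hsh : μ.map shf = μ := hμ.1.1.2
  refine ⟨?_, frozen_zero_one μ hμ⟩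
  have hfmeas : Measurable fun η : X => ind (η 1) := measurable_ind_eval 1
  have hfint : Integrable (fun η : X => ind (η 1)) μ :=
    integrable_of_bdd hfmeas (C := 1)
      (fun x => abs_le.mpr ⟨by linarith [ind_nonneg (x 1)], ind_le_one _⟩)
  refine ⟨∫ x, ind (x 1) ∂μ, ⟨integral_nonneg fun x => ind_nonneg _, ?_⟩, ?_⟩
  · calc ∫ x, ind (x 1) ∂μ ≤ ∫ _, (1:ℝ) ∂μ :=
        integral_mono hfint (integrable_const 1) fun x => ind_le_one _
      _ = 1 := by simp
  · have hfwd := density_half μ hμ SFc measurable_SFc shfInv measurable_shfInv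
      (map_shfInv μ hsh) (fun η => ind (η 1)) hfmeas (fun η => ind_nonneg _)
      (fun η => ind_le_one _) bsum_SFc (fun η α N => SFc_fstep_bound η α N)
      (fun η N => SFc_shf_bound η N)
    have hbwd := density_half μ hμ SBc measurable_SBc shf measurable_shf hsh
      (fun η => ind (η (-1))) (measurable_ind_eval (-1)) (fun η => ind_nonneg _)
      (fun η => ind_le_one _) bsum_SBc (fun η α N => SBc_fstep_bound η α N)
      (fun η N => SBc_shf_bound η N)
    have hint : ∫ x, ind (x (-1)) ∂μ = ∫ x, ind (x 1) ∂μ := integral_back_eq μ hsh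
    rw [hint] at hbwd
    filter_upwards [hfwd, hbwd] with η h1 h2
    exact ⟨h1, h2⟩

end FSSEPPaper
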